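/- With notation as in the Kowalewski case (c₁=c₂=2, c₃=1, a₃=0), setting q = z² - a(w - ka), along any solution of the ODE system one has dq/dt = -iH₃(t)q(t), and consequently |q(t)|² = q(t)·conj(q(t)) is constant in t. -/

import Mathlib

open Complex

theorem kowalewski_integral_of_motion (k a₁ a₂ : ℝ)
    (h₁ h₂ h₃ H₁ H₂ H₃ : ℝ → ℝ)
    (e1 : ∀ t, HasDerivAt h₁ (H₃ t * h₂ t - (1/2) * H₂ t * h₃ t - k * a₂ * H₃ t) t)
    (e2 : ∀ t, HasDerivAt h₂ ((1/2) * H₁ t * h₃ t - H₃ t * h₁ t + k * a₁ * H₃ t) t)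
    (e3 : ∀ t, HasDerivAt h₃ ((1/2) * (H₂ t * h₁ t - H₁ t * h₂ t)
        + k * (a₂ * H₁ t - a₁ * H₂ t)) t)
    (e4 : ∀ t, HasDerivAt H₁ ((1/2) * H₂ t * H₃ t - a₂ * h₃ t) t)
    (e5 : ∀ t, HasDerivAt H₂ (-(1/2) * H₁ t * H₃ t + a₁ * h₃ t) t)
    (e6 : ∀ t, HasDerivAt H₃ (a₂ * h₁ t - a₁ * h₂ t) t)
    (z w q : ℝ → ℂ) (a : ℂ)
    (hz : ∀ t, z t = ((H₁ t : ℂ) + Complex.I * (H₂ t : ℂ)) / 2)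
    (hw : ∀ t, w t = (h₁ t : ℂ) + Complex.I * (h₂ t : ℂ))
    (ha : a = (a₁ : ℂ) + Complex.I * (a₂ : ℂ))
    (hq : ∀ t, q t = (z t)^2 - a * (w t - (k : ℂ) * a)) :
    (∀ t, HasDerivAt q (-Complex.I * (H₃ t : ℂ) * q t) t)
    ∧ ∀ t₁ t₂ : ℝ, q t₁ * (starRingEnd ℂ) (q t₁) = q t₂ * (starRingEnd ℂ) (q t₂) := by
  have hqf : q = fun t => (((H₁ t : ℂ) + Complex.I * (H₂ t : ℂ)) / 2)^2
      - ((a₁ : ℂ) + Complex.I * (a₂ : ℂ)) * (((h₁ t : ℂ) + Complex.I * (h₂ t : ℂ))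
        - (k : ℂ) * ((a₁ : ℂ) + Complex.I * (a₂ : ℂ))) := by
    funext t; rw [hq t, hz t, hw t, ha]
  have hq' : ∀ t, HasDerivAt q (-Complex.I * (H₃ t : ℂ) * q t) t := by
    intro t
    have d1 := (e1 t).ofReal_comp
    have d2 := (e2 t).ofReal_comp
    have d4 := (e4 t).ofReal_comp
    have d5 := (e5 t).ofReal_comp
    have dz := (d4.add (d5.const_mul Complex.I)).div_const 2
    have dz2 := (dz.mul dz)
    have dw := d1.add (d2.const_mul Complex.I)
    have dq := dz2.sub (((dw.sub_const ((k : ℂ) * ((a₁ : ℂ) + Complex.I * (a₂ : ℂ)))).const_mul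
      ((a₁ : ℂ) + Complex.I * (a₂ : ℂ))))
    rw [hqf]
    refine (dq.congr_of_eventuallyEq (Filter.Eventually.of_forall fun s => ?_)).congr_deriv ?_
    · simp only [Pi.add_apply, Pi.sub_apply, Pi.mul_apply]; ring
    · simp only [Pi.add_apply]
      push_cast
      ring_nf
      simp only [show (Complex.I)^3 = -Complex.I from by
        rw [pow_succ, Complex.I_sq]; ring, Complex.I_sq]
      ring
  refine ⟨hq', ?_⟩
  have hf : ∀ t, HasDerivAt (fun t => q t * (starRingEnd ℂ) (q t)) 0 t := by
    intro t
    have := (hq' t).mul (hq' t).star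
    refine this.congr_deriv ?_
    simp [map_mul, Complex.conj_ofReal]
    ring
  intro t₁ t₂
  exact is_const_of_deriv_eq_zero (fun t => (hf t).differentiableAt)
    (fun t => (hf t).deriv) t₁ t₂
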